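/- Let R be a field, G a group, J a subgroup of G, and λ a simple R[J]-module. Assume: (a') the intertwining set of λ in G equals J, i.e. for every g ∈ G with g ∉ J one has Hom_{R[J ∩ gJg⁻¹]}(ᵍλ, λ|_{J ∩ gJg⁻¹}) = 0; and (b') for every R[G]-quotient module π of ind_J^G λ, if λ is isomorphic to an R[J]-submodule of π|_J, then λ is isomorphic to a quotient of π|_J. Then ind_J^G λ is a simple R[G]-module. -/

import Mathlib

open Function

variable {R : Type*} [Field R] {G : Type*} [Group G]
variable {V : Type*} [AddCommGroup V] [Module R V]

/-- The induced module `ind_J^G λ`, modelled as the space of functions `f : G → V`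
with `f (g * j) = σ j⁻¹ (f g)` supported on finitely many left cosets of `J`
(this is the usual model of `R[G] ⊗_{R[J]} V`, with `g ⊗ v` corresponding to the function
supported on `gJ` sending `g * j` to `σ j⁻¹ v`). -/
def indCarrier (J : Subgroup G) (σ : Representation R J V) : Submodule R (G → V) where
  carrier := {f | (∀ (g : G) (j : J), f (g * (j : G)) = σ j⁻¹ (f g)) ∧
      ((QuotientGroup.mk : G → G ⧸ J) '' Function.support f).Finite}
  add_mem' := by
    rintro f g ⟨hf1, hf2⟩ ⟨hg1, hg2⟩
    refine ⟨fun x j => by simp [hf1, hg1], ?_⟩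
    refine (hf2.union hg2).subset ?_
    rw [← Set.image_union]
    exact Set.image_mono (Function.support_add _ _)
  zero_mem' := ⟨fun g j => by simp, by simp⟩
  smul_mem' := by
    rintro c f ⟨hf1, hf2⟩
    refine ⟨fun g j => by simp [hf1], ?_⟩
    exact hf2.subset (Set.image_mono (Function.support_const_smul_subset c f))

/-- The representation of `G` on the induced module `ind_J^G λ`, by left translation:
`(x • f) (g) = f (x⁻¹ * g)`. -/
def indRep (J : Subgroup G) (σ : Representation R J V) :
    Representation R G (indCarrier J σ) where
  toFun x :=
    { toFun := fun f => ⟨fun g => (f : G → V) (x⁻¹ * g), by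
        refine ⟨fun g j => ?_, ?_⟩
        · show (f : G → V) (x⁻¹ * (g * (j : G))) = σ j⁻¹ ((f : G → V) (x⁻¹ * g))
          rw [← mul_assoc]
          exact f.2.1 _ j
        refine ((f.2.2).image (fun c : G ⧸ J => x • c)).subset ?_
        rintro c ⟨g, hg, rfl⟩
        refine ⟨QuotientGroup.mk (x⁻¹ * g), ⟨x⁻¹ * g, hg, rfl⟩, ?_⟩
        show x • (QuotientGroup.mk (x⁻¹ * g) : G ⧸ J) = QuotientGroup.mk g
        rw [MulAction.Quotient.smul_mk, smul_eq_mul, mul_inv_cancel_left]⟩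
      map_add' := fun f g => Subtype.ext (funext fun g' => rfl)
      map_smul' := fun c f => Subtype.ext (funext fun g' => rfl) }
  map_one' := by
    apply LinearMap.ext; intro f
    exact Subtype.ext (funext fun g => by simp)
  map_mul' := fun x y => by
    apply LinearMap.ext; intro f
    exact Subtype.ext (funext fun g => by simp [mul_assoc])


instance (J : Subgroup G) (σ : Representation R J V) :
    AddCommGroup (indRep J σ).asModule := inferInstanceAs (AddCommGroup (indCarrier J σ))

instance {H : Type*} [Group H] (σ : Representation R H V) :
    AddCommGroup σ.asModule := inferInstanceAs (AddCommGroup V)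

/-- The quotient representation on `M ⧸ N`, for `N` a `G`-invariant submodule of `M`. -/
def quotRep {M : Type*} [AddCommGroup M] [Module R M] (ρ : Representation R G M)
    (N : Submodule R M) (hN : ∀ (x : G) (m : M), m ∈ N → ρ x m ∈ N) :
    Representation R G (M ⧸ N) where
  toFun x := Submodule.mapQ N N (ρ x) (fun m hm => hN x m hm)
  map_one' := by
    apply LinearMap.ext
    intro q
    obtain ⟨m, rfl⟩ := Submodule.Quotient.mk_surjective N q
    simp [Submodule.mapQ_apply]
  map_mul' x y := by
    apply LinearMap.ext
    intro q
    obtain ⟨m, rfl⟩ := Submodule.Quotient.mk_surjective N q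
    simp [Submodule.mapQ_apply]

namespace IndProof

open scoped Classical

open Representation

variable (J : Subgroup G) (σ : Representation R J V)

lemma sigma_cancel (j : J) (w : V) : σ j (σ j⁻¹ w) = w := by
  have h : σ j * σ j⁻¹ = 1 := by rw [← map_mul, mul_inv_cancel, map_one]
  calc σ j (σ j⁻¹ w) = (σ j * σ j⁻¹) w := rfl
    _ = w := by rw [h]; rfl

noncomputable def epsFun (v : V) : G → V := fun g => if h : g ∈ J then σ (⟨g, h⟩ : J)⁻¹ v else 0

lemma epsFun_mem (v : V) : epsFun J σ v ∈ indCarrier J σ := by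
  constructor
  · intro g j
    by_cases h : g ∈ J
    · have hgj : g * (j : G) ∈ J := J.mul_mem h j.2
      simp only [epsFun, dif_pos h, dif_pos hgj]
      have h2 : (⟨g * (j : G), hgj⟩ : J) = ⟨g, h⟩ * j := rfl
      rw [h2, mul_inv_rev, map_mul]
      rfl
    · have hgj : g * (j : G) ∉ J := fun hh => h (by simpa using J.mul_mem hh (J.inv_mem j.2))
      simp only [epsFun, dif_neg h, dif_neg hgj, map_zero]
  · apply Set.Finite.subset (Set.finite_singleton ((1 : G) : G ⧸ J))
    rintro c ⟨g, hg, rfl⟩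
    have hgJ : g ∈ J := by
      by_contra h
      exact hg (by simp [epsFun, dif_neg h])
    exact Set.mem_singleton_iff.mpr (QuotientGroup.eq.mpr (by simpa using J.inv_mem hgJ))

noncomputable def eps : V →ₗ[R] indCarrier J σ where
  toFun v := ⟨epsFun J σ v, epsFun_mem J σ v⟩
  map_add' v w := by
    apply Subtype.ext; funext g
    by_cases h : g ∈ J <;> simp [epsFun, h]
  map_smul' r v := by
    apply Subtype.ext; funext g
    by_cases h : g ∈ J <;> simp [epsFun, h]

lemma eps_apply (v : V) (g : G) :
    ((eps J σ v : indCarrier J σ) : G → V) g = if h : g ∈ J then σ (⟨g, h⟩ : J)⁻¹ v else 0 := rfl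

lemma eps_one (v : V) : ((eps J σ v : indCarrier J σ) : G → V) 1 = v := by
  rw [eps_apply, dif_pos J.one_mem]
  have h : (⟨(1 : G), J.one_mem⟩ : J) = 1 := rfl
  rw [h, inv_one, map_one]
  rfl

lemma indRep_apply (x : G) (f : indCarrier J σ) (g : G) :
    ((indRep J σ x f : indCarrier J σ) : G → V) g = (f : G → V) (x⁻¹ * g) := rfl

lemma eps_comm (j : J) (v : V) :
    indRep J σ (j : G) (eps J σ v) = eps J σ (σ j v) := by
  apply Subtype.ext; funext g
  rw [indRep_apply]
  by_cases h : g ∈ J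
  · have h' : (j : G)⁻¹ * g ∈ J := J.mul_mem (J.inv_mem j.2) h
    rw [eps_apply, eps_apply, dif_pos h', dif_pos h]
    have h2 : (⟨(j : G)⁻¹ * g, h'⟩ : J) = j⁻¹ * ⟨g, h⟩ := rfl
    rw [h2, mul_inv_rev, inv_inv, map_mul]
    rfl
  · have h' : (j : G)⁻¹ * g ∉ J := fun hh => h (by simpa using J.mul_mem j.2 hh)
    rw [eps_apply, eps_apply, dif_neg h', dif_neg h]

lemma decomp (f : indCarrier J σ) :
    f = ∑ c ∈ f.2.2.toFinset,
      indRep J σ (Quotient.out c) (eps J σ ((f : G → V) (Quotient.out c))) := by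
  apply Subtype.ext
  rw [AddSubmonoidClass.coe_finset_sum]
  funext x
  rw [Finset.sum_apply]
  have hterm : ∀ c ∈ f.2.2.toFinset,
      ((indRep J σ (Quotient.out c) (eps J σ ((f : G → V) (Quotient.out c))) :
        indCarrier J σ) : G → V) x =
      if c = (QuotientGroup.mk x : G ⧸ J) then (f : G → V) x else 0 := by
    intro c _
    rw [indRep_apply, eps_apply]
    by_cases hc : c = (QuotientGroup.mk x : G ⧸ J)
    · have hmem : (Quotient.out c)⁻¹ * x ∈ J :=
        QuotientGroup.eq.mp (by rw [QuotientGroup.out_eq', hc])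
      rw [if_pos hc, dif_pos hmem]
      have h2 := f.2.1 (Quotient.out c) ⟨(Quotient.out c)⁻¹ * x, hmem⟩
      rw [show Quotient.out c * ((Quotient.out c)⁻¹ * x) = x by group] at h2
      exact h2.symm
    · rw [if_neg hc, dif_neg]
      intro hmem
      exact hc (by rw [← QuotientGroup.out_eq' c]; exact QuotientGroup.eq.mpr hmem)
  rw [Finset.sum_congr rfl hterm, Finset.sum_ite_eq' _ _ (fun _ => (f : G → V) x)]
  by_cases hx : (QuotientGroup.mk x : G ⧸ J) ∈ f.2.2.toFinset
  · rw [if_pos hx]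
  · rw [if_neg hx]
    by_contra h
    have hxs : x ∈ Function.support (f : G → V) := fun h0 => h (by rw [h0])
    exact hx (f.2.2.mem_toFinset.mpr ⟨x, hxs, rfl⟩)

lemma genTop (N : Submodule R (indCarrier J σ))
    (hN : ∀ (x : G) (f : indCarrier J σ), f ∈ N → indRep J σ x f ∈ N)
    (h : ∀ v, eps J σ v ∈ N) : N = ⊤ := by
  rw [eq_top_iff]
  intro f _
  rw [decomp J σ f]
  exact Submodule.sum_mem N fun c _ => hN _ _ (h _)

lemma Phi_form (Φ : indCarrier J σ →ₗ[R] V)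
    (h0 : ∀ g : G, g ∉ J → ∀ v, Φ (indRep J σ g (eps J σ v)) = 0)
    (f : indCarrier J σ) : Φ f = Φ (eps J σ ((f : G → V) 1)) := by
  conv_lhs => rw [decomp J σ f]
  rw [map_sum]
  have hterm : ∀ c ∈ f.2.2.toFinset,
      Φ (indRep J σ (Quotient.out c) (eps J σ ((f : G → V) (Quotient.out c)))) =
      if c = ((1 : G) : G ⧸ J) then Φ (eps J σ ((f : G → V) 1)) else 0 := by
    intro c _
    by_cases hc : Quotient.out c ∈ J
    · have hc1 : c = ((1 : G) : G ⧸ J) := by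
        rw [← QuotientGroup.out_eq' c]
        exact QuotientGroup.eq.mpr (by simpa using J.inv_mem hc)
      rw [if_pos hc1]
      have heq : (f : G → V) (Quotient.out c) =
          σ (⟨Quotient.out c, hc⟩ : J)⁻¹ ((f : G → V) 1) := by
        have h2 := f.2.1 1 ⟨Quotient.out c, hc⟩
        rwa [one_mul] at h2
      rw [heq]
      have h3 := eps_comm J σ (⟨Quotient.out c, hc⟩ : J)
        (σ (⟨Quotient.out c, hc⟩ : J)⁻¹ ((f : G → V) 1))
      rw [show (((⟨Quotient.out c, hc⟩ : J) : G)) = Quotient.out c from rfl] at h3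
      rw [h3, sigma_cancel]
    · rw [if_neg (fun hc1 => hc (by
        have := QuotientGroup.eq.mp ((QuotientGroup.out_eq' c).trans hc1)
        simpa using J.inv_mem this))]
      exact h0 _ hc _
  rw [Finset.sum_congr rfl hterm,
    Finset.sum_ite_eq' _ _ (fun _ => Φ (eps J σ ((f : G → V) 1)))]
  by_cases h1 : ((1 : G) : G ⧸ J) ∈ f.2.2.toFinset
  · rw [if_pos h1]
  · rw [if_neg h1]
    have hf1 : (f : G → V) 1 = 0 := by
      by_contra h
      exact h1 (f.2.2.mem_toFinset.mpr ⟨1, h, rfl⟩)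
    rw [hf1, map_zero, map_zero]

lemma invariant_eq_bot_or_top {H : Type*} [Group H] {M : Type*} [AddCommGroup M] [Module R M]
    (ρ : Representation R H M) (hs : IsSimpleModule (MonoidAlgebra R H) ρ.asModule)
    (W : Submodule R M) (hW : ∀ (x : H) (m : M), m ∈ W → ρ x m ∈ W) : W = ⊥ ∨ W = ⊤ := by
  let p : Submodule (MonoidAlgebra R H) ρ.asModule :=
    { carrier := show Set ρ.asModule from (W : Set M)
      add_mem' := fun ha hb => W.add_mem ha hb
      zero_mem' := W.zero_mem
      smul_mem' := fun a m hm => by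
        show ρ.asAlgebraHom a m ∈ W
        induction a using MonoidAlgebra.induction_on with
        | of g => simpa using hW g m hm
        | add f g hf hg => rw [map_add]; exact W.add_mem hf hg
        | smul r f hf => rw [map_smul]; exact W.smul_mem r hf }
  rcases hs.eq_bot_or_eq_top p with h | h
  · left
    rw [Submodule.eq_bot_iff] at h ⊢
    exact fun m hm => h m hm
  · right
    rw [Submodule.eq_top_iff'] at h ⊢
    exact fun m => h m

end IndProof


/-- Criterion for irreducibility of an induced representation (variant):
let `R` be a field, `G` a group, `J` a subgroup of `G` and `λ` a simple `R[J]`-module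
(given as a representation `σ` of `J` on `V`).  Assume

(a') the intertwining set of `λ` in `G` is `J`: for every `g ∈ G` with `g ∉ J`, the only
`R[J ∩ gJg⁻¹]`-linear map `ᵍλ → λ|_{J ∩ gJg⁻¹}` (where `x ∈ J ∩ gJg⁻¹` acts on `ᵍλ` by
`σ (g⁻¹ x g)`) is zero; and

(b') for every `R[G]`-quotient module `π` of `ind_J^G λ`, if `λ` is isomorphic to an
`R[J]`-submodule of `π|_J` then `λ` is isomorphic to a quotient of `π|_J`.

Then `ind_J^G λ` is a simple `R[G]`-module. -/
theorem stmt_1 (J : Subgroup G) (σ : Representation R J V)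
    (hsimple : IsSimpleModule (MonoidAlgebra R J) σ.asModule)
    (ha' : ∀ g : G, g ∉ J → ∀ f : V →ₗ[R] V,
      (∀ (x : G) (hx : x ∈ J) (hx' : g⁻¹ * x * g ∈ J) (v : V),
        f (σ ⟨g⁻¹ * x * g, hx'⟩ v) = σ ⟨x, hx⟩ (f v)) → f = 0)
    (hb' : ∀ (N : Submodule R (indCarrier J σ))
      (hN : ∀ (x : G) (f : indCarrier J σ), f ∈ N → indRep J σ x f ∈ N),
      (∃ ψ : V →ₗ[R] (indCarrier J σ ⧸ N), Function.Injective ψ ∧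
        ∀ (j : J) (v : V),
          ψ (σ j v) = quotRep (indRep J σ) N hN (j : G) (ψ v)) →
      (∃ φ : (indCarrier J σ ⧸ N) →ₗ[R] V, Function.Surjective φ ∧
        ∀ (j : J) (y : indCarrier J σ ⧸ N),
          φ (quotRep (indRep J σ) N hN (j : G) y) = σ j (φ y))) :
    IsSimpleModule (MonoidAlgebra R G) (indRep J σ).asModule := by
  classical
  open IndProof in
  haveI hVnt : Nontrivial V := by
    have h := IsSimpleModule.nontrivial (MonoidAlgebra R J) σ.asModule
    exact h
  obtain ⟨v0, hv0⟩ := exists_ne (0 : V)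
  haveI : Nontrivial (Submodule (MonoidAlgebra R G) (indRep J σ).asModule) := by
    refine ⟨⊥, ⊤, fun h => ?_⟩
    have hmem : (IndProof.eps J σ v0 : (indRep J σ).asModule) ∈
        (⊥ : Submodule (MonoidAlgebra R G) (indRep J σ).asModule) := by
      rw [h]; trivial
    replace hmem := (Submodule.mem_bot (R := MonoidAlgebra R G) (M := (indRep J σ).asModule)).mp hmem
    apply hv0
    rw [← IndProof.eps_one J σ v0, hmem]
    rfl
  refine { eq_bot_or_eq_top := fun p => ?_ }
  let N : Submodule R (indCarrier J σ) :=
    { carrier := show Set (indCarrier J σ) from (p : Set (indRep J σ).asModule)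
      add_mem' := fun ha hb => p.add_mem ha hb
      zero_mem' := p.zero_mem
      smul_mem' := fun r f hf => by
        have h2 := p.smul_mem (MonoidAlgebra.single (1 : G) r) hf
        have h3 : MonoidAlgebra.single (1 : G) r • (show (indRep J σ).asModule from f) = r • f := by
          show (indRep J σ).asAlgebraHom (MonoidAlgebra.single 1 r) f = r • f
          rw [Representation.asAlgebraHom_single, map_one]
          rfl
        rwa [h3] at h2 }
  have hN : ∀ (x : G) (f : indCarrier J σ), f ∈ N → indRep J σ x f ∈ N := by
    intro x f hf
    have h2 := p.smul_mem (MonoidAlgebra.single x (1 : R)) hf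
    have h3 : MonoidAlgebra.single x (1 : R) • (show (indRep J σ).asModule from f) = indRep J σ x f := by
      show (indRep J σ).asAlgebraHom (MonoidAlgebra.single x 1) f = _
      rw [Representation.asAlgebraHom_single, one_smul]
    rwa [h3] at h2
  by_cases hall : ∀ v : V, IndProof.eps J σ v ∈ N
  · right
    have hNtop := IndProof.genTop J σ N hN hall
    rw [Submodule.eq_top_iff'] at hNtop ⊢
    exact fun f => hNtop f
  · left
    push_neg at hall
    obtain ⟨w0, hw0⟩ := hall
    set ψ : V →ₗ[R] (indCarrier J σ ⧸ N) := N.mkQ.comp (IndProof.eps J σ) with hψdef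
    have hquot : ∀ (x : G) (f : indCarrier J σ),
        quotRep (indRep J σ) N hN x (N.mkQ f) = N.mkQ (indRep J σ x f) := by
      intro x f
      show Submodule.mapQ N N (indRep J σ x) (fun m hm => hN x m hm) (Submodule.Quotient.mk f) = _
      rw [Submodule.mapQ_apply]
      rfl
    have hψcomm : ∀ (j : J) (v : V), ψ (σ j v) = quotRep (indRep J σ) N hN (j : G) (ψ v) := by
      intro j v
      show N.mkQ (IndProof.eps J σ (σ j v)) = quotRep (indRep J σ) N hN (j : G) (N.mkQ (IndProof.eps J σ v))
      rw [hquot, IndProof.eps_comm]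
    have hψinj : Function.Injective ψ := by
      have hker : ∀ (x : J) (m : V), m ∈ LinearMap.ker ψ → σ x m ∈ LinearMap.ker ψ := by
        intro x m hm
        rw [LinearMap.mem_ker] at hm ⊢
        rw [hψcomm, hm, map_zero]
      rcases IndProof.invariant_eq_bot_or_top σ hsimple (LinearMap.ker ψ) hker with hk | hk
      · exact LinearMap.ker_eq_bot.mp hk
      · exfalso
        have hw : w0 ∈ LinearMap.ker ψ := by rw [hk]; trivial
        rw [LinearMap.mem_ker] at hw
        have : IndProof.eps J σ w0 ∈ N := by
          rwa [hψdef, LinearMap.comp_apply, Submodule.mkQ_apply,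
            Submodule.Quotient.mk_eq_zero] at hw
        exact hw0 this
    obtain ⟨φ, hφsurj, hφcomm⟩ := hb' N hN ⟨ψ, hψinj, hψcomm⟩
    set Φ : indCarrier J σ →ₗ[R] V := φ.comp N.mkQ with hΦdef
    have hΦJ : ∀ (j : J) (f : indCarrier J σ), Φ (indRep J σ (j : G) f) = σ j (Φ f) := by
      intro j f
      show φ (N.mkQ (indRep J σ (j : G) f)) = σ j (φ (N.mkQ f))
      rw [← hquot, hφcomm]
    have hΦN : ∀ f ∈ N, Φ f = 0 := by
      intro f hf
      show φ (N.mkQ f) = 0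
      rw [Submodule.mkQ_apply, (Submodule.Quotient.mk_eq_zero N).mpr hf, map_zero]
    have h0 : ∀ g : G, g ∉ J → ∀ v, Φ (indRep J σ g (IndProof.eps J σ v)) = 0 := by
      intro g hg
      have hT := ha' g hg (Φ.comp ((indRep J σ g).comp (IndProof.eps J σ))) ?_
      · intro v
        have := DFunLike.congr_fun hT v
        simpa using this
      · intro x hx hx' v
        show Φ (indRep J σ g (IndProof.eps J σ (σ ⟨g⁻¹ * x * g, hx'⟩ v))) =
          σ ⟨x, hx⟩ (Φ (indRep J σ g (IndProof.eps J σ v)))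
        rw [← IndProof.eps_comm J σ ⟨g⁻¹ * x * g, hx'⟩ v]
        have hxg : g * (g⁻¹ * x * g) = x * g := by group
        have e1 : indRep J σ g (indRep J σ (g⁻¹ * x * g) (IndProof.eps J σ v)) =
            indRep J σ x (indRep J σ g (IndProof.eps J σ v)) := by
          have h1 := map_mul (indRep J σ) g (g⁻¹ * x * g)
          have h2 := map_mul (indRep J σ) x g
          rw [hxg] at h1
          calc indRep J σ g (indRep J σ (g⁻¹ * x * g) (IndProof.eps J σ v))
              = indRep J σ (x * g) (IndProof.eps J σ v) := by rw [h1]; rfl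
            _ = indRep J σ x (indRep J σ g (IndProof.eps J σ v)) := by rw [h2]; rfl
        rw [show (((⟨g⁻¹ * x * g, hx'⟩ : J) : G)) = g⁻¹ * x * g from rfl, e1]
        exact hΦJ ⟨x, hx⟩ _
    set c : V →ₗ[R] V := Φ.comp (IndProof.eps J σ) with hcdef
    have hΦform : ∀ f : indCarrier J σ, Φ f = c ((f : G → V) 1) :=
      fun f => IndProof.Phi_form J σ Φ h0 f
    have hcne : c ≠ 0 := by
      intro hc0
      obtain ⟨q, hq⟩ := hφsurj v0
      obtain ⟨f, rfl⟩ := Submodule.mkQ_surjective N q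
      apply hv0
      rw [← hq]
      show Φ f = 0
      rw [hΦform, hc0]
      rfl
    have hcinj : Function.Injective c := by
      have hker : ∀ (x : J) (m : V), m ∈ LinearMap.ker c → σ x m ∈ LinearMap.ker c := by
        intro x m hm
        rw [LinearMap.mem_ker] at hm ⊢
        have : c (σ x m) = σ x (c m) := by
          show Φ (IndProof.eps J σ (σ x m)) = σ x (Φ (IndProof.eps J σ m))
          rw [← IndProof.eps_comm, hΦJ]
        rw [this, hm, map_zero]
      rcases IndProof.invariant_eq_bot_or_top σ hsimple (LinearMap.ker c) hker with hk | hk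
      · exact LinearMap.ker_eq_bot.mp hk
      · exact absurd (LinearMap.ker_eq_top.mp hk) hcne
    rw [Submodule.eq_bot_iff]
    intro f hf
    let f' : indCarrier J σ := f
    have hfN : f' ∈ N := hf
    have hzero : ∀ x : G, (f' : G → V) x = 0 := by
      intro x
      have h1 : indRep J σ x⁻¹ f' ∈ N := hN x⁻¹ f' hfN
      have h2 : Φ (indRep J σ x⁻¹ f') = 0 := hΦN _ h1
      rw [hΦform] at h2
      have h3 : ((indRep J σ x⁻¹ f' : indCarrier J σ) : G → V) 1 = (f' : G → V) x := by
        rw [IndProof.indRep_apply]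
        norm_num
      rw [h3] at h2
      exact hcinj (by rw [h2, map_zero])
    have hf0 : f' = 0 := Subtype.ext (funext hzero)
    exact hf0
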